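/- Let U and W be ultrafilters such that for every infinite cardinal λ, either U or W is (λ, 2^λ)-indecomposable. Then the Cartesian product U × W is an ultrafilter. -/
import Mathlib


open Filter Set Cardinal

universe u v w

/-- The left tensor product `F ⋉ G` of two filters. -/
def ltimes {X : Type u} {Y : Type v} (F : Filter X) (G : Filter Y) :
    Filter (X × Y) where
  sets := {R | {x | {y | (x, y) ∈ R} ∈ G} ∈ F}
  univ_sets := by simp
  sets_of_superset := by
    intro R S hR hRS
    refine Filter.mem_of_superset hR ?_
    intro x hx
    exact Filter.mem_of_superset hx fun y hy => hRS hy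
  inter_sets := by
    intro R S hR hS
    refine Filter.mem_of_superset (Filter.inter_mem hR hS) ?_
    rintro x ⟨hx1, hx2⟩
    exact Filter.inter_mem hx1 hx2

/-- The right tensor product `F ⋊ G` of two filters. -/
def rtimes {X : Type u} {Y : Type v} (F : Filter X) (G : Filter Y) :
    Filter (X × Y) where
  sets := {R | {y | {x | (x, y) ∈ R} ∈ F} ∈ G}
  univ_sets := by simp
  sets_of_superset := by
    intro R S hR hRS
    refine Filter.mem_of_superset hR ?_
    intro y hy
    exact Filter.mem_of_superset hy fun x hx => hRS hx
  inter_sets := by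
    intro R S hR hS
    refine Filter.mem_of_superset (Filter.inter_mem hR hS) ?_
    rintro y ⟨hy1, hy2⟩
    exact Filter.inter_mem hy1 hy2

/-- `IsFClosed F G` means: `G` is `F`-closed. -/
def IsFClosed {X : Type u} {Y : Type v} (F : Filter X) (G : Filter Y) : Prop :=
  ∀ B : X → Set Y, (∀ x, B x ∈ G) → ∃ A ∈ F, (⋂ x ∈ A, B x) ∈ G

/-- `IsRegularFor F G` means: `F` is `G`-regular. -/
def IsRegularFor {X : Type u} {Y : Type v} (F : Filter X) (G : Filter Y) : Prop :=
  ∃ A : Y → Set X, (∀ y, A y ∈ F) ∧ ∀ B : Set Y, Bᶜ ∉ G → (⋂ y ∈ B, A y) = ∅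

/-- The Katetov order on filters: `G ≤kat H` iff some pushforward of `H` extends `G`. -/
def Katetov {Y : Type u} {Z : Type v} (G : Filter Y) (H : Filter Z) : Prop :=
  ∃ f : Z → Y, Filter.map f H ≤ G

/-- A filter is an ultrafilter. -/
def IsUltra {α : Type u} (F : Filter α) : Prop :=
  ∃ V : Ultrafilter α, (V : Filter α) = F

/-- `(λ, η)`-indecomposability of a filter. -/
def Indecomposable {X : Type u} (F : Filter X) (lam eta : Cardinal.{u}) : Prop :=
  ∀ P : Set (Set X), #P ≤ eta → ⋃₀ P ∈ F →
    ∃ Q ⊆ P, #Q < lam ∧ ⋃₀ Q ∈ F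

/-- `λ`-decomposability: the negation of `(λ, λ)`-indecomposability. -/
def Decomposable {X : Type u} (F : Filter X) (lam : Cardinal.{u}) : Prop :=
  ¬ Indecomposable F lam lam

/-- `(κ, δ)`-regularity of a filter. -/
def CardRegular {X : Type u} (F : Filter X) (kappa delta : Cardinal.{u}) : Prop :=
  ∃ B : delta.out → Set X, (∀ α, B α ∈ F) ∧
    ∀ σ : Set delta.out, kappa ≤ #σ → (⋂ α ∈ σ, B α) = ∅

/-- The Fréchet filter `F_λ(λ)`: subsets of (a set of size) `λ` whose complement
has cardinality less than `λ`. -/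
def frechetFilter (lam : Cardinal.{u}) (h : ℵ₀ ≤ lam) : Filter lam.out where
  sets := {A | #(Aᶜ : Set lam.out) < lam}
  univ_sets := by
    have : #((Set.univ : Set lam.out)ᶜ : Set lam.out) = 0 := by simp
    simp only [Set.mem_setOf_eq, this]
    exact lt_of_lt_of_le aleph0_pos h
  sets_of_superset := by
    intro A B hA hAB
    exact lt_of_le_of_lt (Cardinal.mk_le_mk_of_subset (Set.compl_subset_compl.mpr hAB)) hA
  inter_sets := by
    intro A B hA hB
    simp only [Set.mem_setOf_eq, Set.compl_inter]
    exact lt_of_le_of_lt (Cardinal.mk_union_le _ _) (Cardinal.add_lt_of_lt h hA hB)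

/-- The dual of a filter `F` on `X`: the family of complements of members of `F`. -/
def dualFamily {X : Type u} (F : Filter X) : Set (Set X) := {s | sᶜ ∈ F}

/-- The fine filter `𝔽(F)` on the dual of `F`, generated by the sets
`{σ ∈ F* | x ∈ σ}` for `x ∈ X`. -/
def fineFilter {X : Type u} (F : Filter X) : Filter (dualFamily F) :=
  Filter.generate (Set.range fun x : X => {σ : dualFamily F | x ∈ σ.1})

section ProdUltraAux
universe q
variable {X Y : Type q}

lemma card_family_le_power {s : Set Y} {T : Set (Set Y)} (hT : ∀ t ∈ T, t ⊆ s) :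
    #T ≤ 2 ^ #s := by
  have hinj : Function.Injective (fun t : T => {y : s | (y : Y) ∈ (t : Set Y)}) := by
    intro t₁ t₂ hEq
    apply Subtype.ext
    ext y
    constructor
    · intro hy
      have hys : y ∈ s := hT _ t₁.2 hy
      exact (Set.ext_iff.mp hEq ⟨y, hys⟩).mp hy
    · intro hy
      have hys : y ∈ s := hT _ t₂.2 hy
      exact (Set.ext_iff.mp hEq ⟨y, hys⟩).mpr hy
  calc #T ≤ #(Set s) := Cardinal.mk_le_of_injective hinj
    _ = 2 ^ #s := Cardinal.mk_set

lemma card_img_le_of_sat {B : X → Set Y} {A : Set X} {D : Set (Set Y)}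
    (hsat : ∀ x ∈ A, ∀ p ∈ D, p ⊆ B x ∨ p ∩ B x = ∅) :
    #((fun x => B x ∩ ⋃₀ D) '' A) ≤ 2 ^ #D := by
  have key : ∀ v ∈ (fun x => B x ∩ ⋃₀ D) '' A, v = ⋃₀ {p | p ∈ D ∧ p ⊆ v} := by
    rintro v ⟨x, hx, rfl⟩
    apply Subset.antisymm
    · rintro y ⟨hyB, p, hpD, hyp⟩
      rcases hsat x hx p hpD with hsub | hdis
      · exact ⟨p, ⟨hpD, fun z hz => ⟨hsub hz, ⟨p, hpD, hz⟩⟩⟩, hyp⟩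
      · exact absurd (Set.mem_inter hyp hyB) (by rw [hdis]; exact notMem_empty y)
    · rintro y ⟨p, ⟨hpD, hpsub⟩, hyp⟩
      exact hpsub hyp
  have hinj : Function.Injective
      (fun v : ((fun x => B x ∩ ⋃₀ D) '' A) => {p : D | (p : Set Y) ⊆ (v : Set Y)}) := by
    intro v₁ v₂ hEq
    apply Subtype.ext
    rw [key _ v₁.2, key _ v₂.2]
    have hset : {p | p ∈ D ∧ p ⊆ (v₁ : Set Y)} = {p | p ∈ D ∧ p ⊆ (v₂ : Set Y)} := by
      ext p
      constructor
      · rintro ⟨hpD, hsub⟩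
        exact ⟨hpD, (Set.ext_iff.mp hEq ⟨p, hpD⟩).mp hsub⟩
      · rintro ⟨hpD, hsub⟩
        exact ⟨hpD, (Set.ext_iff.mp hEq ⟨p, hpD⟩).mpr hsub⟩
    rw [hset]
  calc #((fun x => B x ∩ ⋃₀ D) '' A) ≤ #(Set D) := Cardinal.mk_le_of_injective hinj
    _ = 2 ^ #D := Cardinal.mk_set

lemma card_img_restrict {B : X → Set Y} {A : Set X} {Ch Ch' : Set Y} (h : Ch' ⊆ Ch) :
    #((fun x => B x ∩ Ch') '' A) ≤ #((fun x => B x ∩ Ch) '' A) := by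
  have heq : (fun x => B x ∩ Ch') '' A = (fun v => v ∩ Ch') '' ((fun x => B x ∩ Ch) '' A) := by
    rw [Set.image_image]
    apply Set.image_congr
    intro x _
    rw [Set.inter_assoc, Set.inter_eq_self_of_subset_right h]
  rw [heq]
  exact Cardinal.mk_image_le

lemma merge_exists {B : X → Set Y} {A : Set X} {Ch : Set Y} {C : Set (Set Y)}
    (hcover : ⋃₀ C = Ch) (hsub : ∀ p ∈ C, p ⊆ Ch)
    (hsat : ∀ x ∈ A, ∀ p ∈ C, p ⊆ B x ∨ p ∩ B x = ∅) :
    ∃ C' : Set (Set Y), ⋃₀ C' = Ch ∧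
      (∀ x ∈ A, ∀ G ∈ C', G ⊆ B x ∨ G ∩ B x = ∅) ∧
      #C' ≤ #C ∧ #C' ≤ 2 ^ #((fun x => B x ∩ Ch) '' A) := by
  classical
  set img : Set (Set Y) := (fun x => B x ∩ Ch) '' A with himg
  set π : Set Y → Set (Set Y) := fun p => {v | v ∈ img ∧ p ⊆ v} with hπ
  refine ⟨(fun t => ⋃₀ {p | p ∈ C ∧ π p = t}) '' (π '' C), ?_, ?_, ?_, ?_⟩
  · apply Subset.antisymm
    · rintro y ⟨G, ⟨t, _, rfl⟩, hyG⟩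
      obtain ⟨p, ⟨hpC, _⟩, hyp⟩ := hyG
      exact hsub p hpC hyp
    · intro y hy
      rw [← hcover] at hy
      obtain ⟨p, hpC, hyp⟩ := hy
      exact ⟨⋃₀ {p' | p' ∈ C ∧ π p' = π p}, ⟨π p, ⟨p, hpC, rfl⟩, rfl⟩, ⟨p, ⟨hpC, rfl⟩, hyp⟩⟩
  · rintro x hx G ⟨t, ⟨p₀, hp₀, rfl⟩, rfl⟩
    have hv : B x ∩ Ch ∈ img := ⟨x, hx, rfl⟩
    by_cases hvt : (B x ∩ Ch) ∈ π p₀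
    · left
      rintro y ⟨p, ⟨hpC, hπp⟩, hyp⟩
      have hmem : (B x ∩ Ch) ∈ π p := by rw [hπp]; exact hvt
      exact (hmem.2 hyp).1
    · right
      by_contra hne
      rw [← Ne, ← Set.nonempty_iff_ne_empty] at hne
      obtain ⟨y, hyG, hyB⟩ := hne
      obtain ⟨p, ⟨hpC, hπp⟩, hyp⟩ := hyG
      rcases hsat x hx p hpC with hsubp | hdis
      · have hpv : p ⊆ B x ∩ Ch := fun z hz => ⟨hsubp hz, hsub p hpC hz⟩
        have hmem : (B x ∩ Ch) ∈ π p := ⟨hv, hpv⟩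
        rw [hπp] at hmem
        exact hvt hmem
      · have hmem : y ∈ p ∩ B x := ⟨hyp, hyB⟩
        rw [hdis] at hmem
        exact notMem_empty y hmem
  · calc #((fun t => ⋃₀ {p | p ∈ C ∧ π p = t}) '' (π '' C)) ≤ #(π '' C) :=
        Cardinal.mk_image_le
      _ ≤ #C := Cardinal.mk_image_le
  · calc #((fun t => ⋃₀ {p | p ∈ C ∧ π p = t}) '' (π '' C)) ≤ #(π '' C) :=
        Cardinal.mk_image_le
      _ ≤ 2 ^ #img := card_family_le_power (by rintro t ⟨p, _, rfl⟩; exact fun v hv => hv.1)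

lemma minsel {W : Ultrafilter Y} {C' : Set (Set Y)} (hmem : ⋃₀ C' ∈ W) :
    ∃ D : Set (Set Y), D ⊆ C' ∧ ⋃₀ D ∈ W ∧ (∀ Q ⊆ D, #Q < #D → ⋃₀ Q ∉ W) ∧ #D ≤ #C' := by
  obtain ⟨m, ⟨D, hDC, hDm, hDW⟩, hmin⟩ :=
    Cardinal.lt_wf.has_min {c | ∃ D : Set (Set Y), D ⊆ C' ∧ #D = c ∧ ⋃₀ D ∈ W}
      ⟨#C', C', subset_rfl, rfl, hmem⟩
  refine ⟨D, hDC, hDW, ?_, ?_⟩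
  · intro Q hQ hlt hQW
    exact hmin #Q ⟨Q, hQ.trans hDC, rfl, hQW⟩ (hDm ▸ hlt)
  · rw [hDm]
    exact not_lt.mp (hmin #C' ⟨C', subset_rfl, rfl, hmem⟩)

lemma aleph0_le_card_of_null {W : Ultrafilter Y} {D : Set (Set Y)}
    (hW : ⋃₀ D ∈ W) (hnull : ∀ G ∈ D, G ∉ W) : ℵ₀ ≤ #D := by
  by_contra hlt
  push_neg at hlt
  have hfin : D.Finite := Cardinal.lt_aleph0_iff_set_finite.mp hlt
  obtain ⟨G, hG, hGW⟩ := (Ultrafilter.finite_sUnion_mem_iff hfin).mp hW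
  exact hnull G hG hGW

lemma collapse {U : Ultrafilter X} {lam : Cardinal.{q}}
    (hInd : Indecomposable (U : Filter X) lam (2 ^ lam))
    {A : Set X} (hA : A ∈ U) (m : X → Set Y) (hbud : #(m '' A) ≤ 2 ^ lam) :
    ∃ A' : Set X, A' ⊆ A ∧ A' ∈ U ∧ #(m '' A') < lam := by
  classical
  set P : Set (Set X) := (fun v => {x | x ∈ A ∧ m x = v}) '' (m '' A) with hP
  have hPU : ⋃₀ P ∈ (U : Filter X) := by
    refine mem_of_superset hA ?_
    intro x hx
    exact ⟨{x' | x' ∈ A ∧ m x' = m x}, ⟨m x, ⟨x, hx, rfl⟩, rfl⟩, ⟨hx, rfl⟩⟩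
  have hcard : #P ≤ 2 ^ lam := Cardinal.mk_image_le.trans hbud
  obtain ⟨Q, hQP, hQlt, hQU⟩ := hInd P hcard hPU
  have hQA : ⋃₀ Q ⊆ A := by
    rintro x ⟨s, hsQ, hxs⟩
    obtain ⟨v, _, rfl⟩ := hQP hsQ
    exact hxs.1
  refine ⟨⋃₀ Q, hQA, hQU, ?_⟩
  have hval : ∀ s : Q, ∃ v : Set Y, (s : Set X) = {x | x ∈ A ∧ m x = v} := by
    rintro ⟨s, hsQ⟩
    obtain ⟨v, _, rfl⟩ := hQP hsQ
    exact ⟨v, rfl⟩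
  choose val hvalspec using hval
  have himgsub : m '' (⋃₀ Q) ⊆ Set.range val := by
    rintro v ⟨x, ⟨s, hsQ, hxs⟩, rfl⟩
    have hxs' : x ∈ {x | x ∈ A ∧ m x = val ⟨s, hsQ⟩} := (hvalspec ⟨s, hsQ⟩) ▸ hxs
    exact ⟨⟨s, hsQ⟩, hxs'.2.symm⟩
  calc #(m '' (⋃₀ Q)) ≤ #(Set.range val) := Cardinal.mk_le_mk_of_subset himgsub
    _ ≤ #Q := Cardinal.mk_range_le
    _ < lam := hQlt


lemma bridge {U : Ultrafilter X} {W : Ultrafilter Y}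
    (h : ∀ lam : Cardinal.{q}, ℵ₀ ≤ lam →
      Indecomposable (U : Filter X) lam (2 ^ lam) ∨ Indecomposable (W : Filter Y) lam (2 ^ lam))
    {D : Set (Set Y)} (hDW : ⋃₀ D ∈ W) (hDuni : ∀ Q ⊆ D, #Q < #D → ⋃₀ Q ∉ W)
    {lam : Cardinal.{q}} (h₀ : ℵ₀ ≤ lam) (h₁ : lam ≤ #D) (h₂ : #D ≤ 2 ^ lam) :
    Indecomposable (U : Filter X) lam (2 ^ lam) := by
  rcases h lam h₀ with hU | hW'
  · exact hU
  · exfalso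
    obtain ⟨Q, hQD, hQlt, hQW⟩ := hW' D h₂ hDW
    exact hDuni Q hQD (hQlt.trans_le h₁) hQW

/-- The state of the descent. -/
def PState (U : Ultrafilter X) (W : Ultrafilter Y) (B : X → Set Y)
    (ι ρ : Cardinal.{q}) : Prop :=
  ∃ (A : Set X) (Ch : Set Y) (C : Set (Set Y)),
    A ∈ U ∧ Ch ∈ W ∧ ⋃₀ C = Ch ∧
    #C = ι ∧ ℵ₀ ≤ ι ∧ (∀ Q ⊆ C, #Q < ι → ⋃₀ Q ∉ W) ∧
    (∀ x ∈ A, ∀ p ∈ C, p ⊆ B x ∨ p ∩ B x = ∅) ∧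
    #((fun x => B x ∩ Ch) '' A) ≤ ρ ∧ ρ < ι

/-- One descent round. -/
lemma descentRound {U : Ultrafilter X} {W : Ultrafilter Y} {B : X → Set Y}
    (h : ∀ lam : Cardinal.{q}, ℵ₀ ≤ lam →
      Indecomposable (U : Filter X) lam (2 ^ lam) ∨ Indecomposable (W : Filter Y) lam (2 ^ lam))
    (hNoBig : ∀ A ∈ U, ∀ G ∈ W, ¬ (∀ x ∈ A, G ⊆ B x ∨ G ∩ B x = ∅))
    {ι ρ : Cardinal.{q}} (hst : PState U W B ι ρ) :
    ∃ ι' ρ', PState U W B ι' ρ' ∧ (ι' < ι ∨ (ι' = ι ∧ ρ' < ρ)) := by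
  obtain ⟨A, Ch, C, hA, hCh, hcover, hcard, hinf, huni, hsat, hvar, hρι⟩ := hst
  have hsub : ∀ p ∈ C, p ⊆ Ch := by
    intro p hp
    rw [← hcover]
    exact subset_sUnion_of_mem hp
  obtain ⟨C', hcov', hsat', hle₁, hle₂⟩ := merge_exists hcover hsub hsat
  have hC'W : ⋃₀ C' ∈ W := hcov' ▸ hCh
  obtain ⟨D, hDC', hDW, hDuni, hDle⟩ := minsel hC'W
  have hsatD : ∀ x ∈ A, ∀ p ∈ D, p ⊆ B x ∨ p ∩ B x = ∅ :=
    fun x hx p hp => hsat' x hx p (hDC' hp)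
  have hnull : ∀ G ∈ D, G ∉ W := by
    intro G hG hGW
    exact hNoBig A hA G hGW (fun x hx => hsatD x hx G hG)
  have hinfD : ℵ₀ ≤ #D := aleph0_le_card_of_null hDW hnull
  have hDleι : #D ≤ ι := hcard ▸ (hDle.trans hle₁)
  have hChsub : ⋃₀ D ⊆ Ch := by
    rw [← hcov']
    exact sUnion_subset_sUnion hDC'
  rcases lt_or_eq_of_le hDleι with hlt | heq
  · -- descent in the first coordinate
    have hInd := bridge h hDW hDuni hinfD le_rfl (Cardinal.cantor #D).le
    have hbud : #((fun x => B x ∩ ⋃₀ D) '' A) ≤ 2 ^ #D := card_img_le_of_sat hsatD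
    obtain ⟨A', hA'A, hA'U, hA'var⟩ := collapse hInd hA _ hbud
    refine ⟨#D, #((fun x => B x ∩ ⋃₀ D) '' A'), ⟨A', ⋃₀ D, D, hA'U, hDW, rfl, rfl, hinfD,
      hDuni, fun x hx p hp => hsatD x (hA'A hx) p hp, le_rfl, hA'var⟩, Or.inl hlt⟩
  · -- stabilized: descent in the second coordinate
    have hι2ρ : ι ≤ 2 ^ ρ := by
      rw [← heq]
      exact hDle.trans (hle₂.trans (Cardinal.power_le_power_left two_ne_zero hvar))
    obtain ⟨lam₀, hlam₀L, hlam₀min⟩ :=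
      Cardinal.lt_wf.has_min {c : Cardinal | ι ≤ 2 ^ c} ⟨ι, (Cardinal.cantor ι).le⟩
    have hlam₀ρ : lam₀ ≤ ρ := not_lt.mp (hlam₀min ρ hι2ρ)
    have hlam₀inf : ℵ₀ ≤ lam₀ := by
      by_contra hfin
      push_neg at hfin
      have h2 : (2 : Cardinal) ^ lam₀ < ℵ₀ :=
        Cardinal.power_lt_aleph0 (Cardinal.nat_lt_aleph0 2) hfin
      exact absurd hlam₀L (not_le.mpr (h2.trans_le hinf))
    have hInd := bridge h hDW hDuni hlam₀inf
      (heq ▸ (hlam₀ρ.trans hρι.le)) (heq ▸ hlam₀L)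
    have hbud : #((fun x => B x ∩ ⋃₀ D) '' A) ≤ 2 ^ lam₀ := by
      calc #((fun x => B x ∩ ⋃₀ D) '' A) ≤ #((fun x => B x ∩ Ch) '' A) :=
            card_img_restrict hChsub
        _ ≤ ρ := hvar
        _ ≤ 2 ^ lam₀ := (hρι.trans_le hlam₀L).le
    obtain ⟨A', hA'A, hA'U, hA'var⟩ := collapse hInd hA _ hbud
    refine ⟨ι, #((fun x => B x ∩ ⋃₀ D) '' A'), ⟨A', ⋃₀ D, D, hA'U, hDW, rfl, heq ▸ rfl,
      hinf, ?_, fun x hx p hp => hsatD x (hA'A hx) p hp, le_rfl, ?_⟩,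
      Or.inr ⟨rfl, hA'var.trans_le hlam₀ρ⟩⟩
    · intro Q hQ hltQ
      exact hDuni Q hQ (heq ▸ hltQ)
    · exact hA'var.trans_le (hlam₀ρ.trans hρι.le)

/-- Construct an initial state. -/
lemma init {U : Ultrafilter X} {W : Ultrafilter Y} {B : X → Set Y}
    (h : ∀ lam : Cardinal.{q}, ℵ₀ ≤ lam →
      Indecomposable (U : Filter X) lam (2 ^ lam) ∨ Indecomposable (W : Filter Y) lam (2 ^ lam))
    (hNoBig : ∀ A ∈ U, ∀ G ∈ W, ¬ (∀ x ∈ A, G ⊆ B x ∨ G ∩ B x = ∅)) :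
    ∃ ι ρ, PState U W B ι ρ := by
  classical
  have hcover : ⋃₀ (Set.range fun y : Y => ({y} : Set Y)) = (Set.univ : Set Y) := by
    rw [Set.sUnion_range]
    exact Set.iUnion_of_singleton Y
  have hsub : ∀ p ∈ (Set.range fun y : Y => ({y} : Set Y)), p ⊆ Set.univ :=
    fun p _ => subset_univ p
  have hsat : ∀ x ∈ (Set.univ : Set X), ∀ p ∈ (Set.range fun y : Y => ({y} : Set Y)),
      p ⊆ B x ∨ p ∩ B x = ∅ := by
    rintro x _ p ⟨y, rfl⟩
    by_cases hy : y ∈ B x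
    · exact Or.inl (Set.singleton_subset_iff.mpr hy)
    · exact Or.inr (Set.singleton_inter_eq_empty.mpr hy)
  obtain ⟨C', hcov', hsat', _, _⟩ := merge_exists hcover hsub hsat
  have hC'W : ⋃₀ C' ∈ W := by rw [hcov']; exact univ_mem
  obtain ⟨D, hDC', hDW, hDuni, _⟩ := minsel hC'W
  have hsatD : ∀ x ∈ (Set.univ : Set X), ∀ p ∈ D, p ⊆ B x ∨ p ∩ B x = ∅ :=
    fun x hx p hp => hsat' x hx p (hDC' hp)
  have hnull : ∀ G ∈ D, G ∉ W := by
    intro G hG hGW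
    exact hNoBig Set.univ univ_mem G hGW (fun x hx => hsatD x hx G hG)
  have hinfD : ℵ₀ ≤ #D := aleph0_le_card_of_null hDW hnull
  have hInd := bridge h hDW hDuni hinfD le_rfl (Cardinal.cantor #D).le
  have hbud : #((fun x => B x ∩ ⋃₀ D) '' Set.univ) ≤ 2 ^ #D := card_img_le_of_sat hsatD
  obtain ⟨A', _, hA'U, hA'var⟩ := collapse hInd univ_mem _ hbud
  exact ⟨#D, #((fun x => B x ∩ ⋃₀ D) '' A'), A', ⋃₀ D, D, hA'U, hDW, rfl, rfl, hinfD,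
    hDuni, fun x hx p hp => hsatD x (mem_univ x) p hp, le_rfl, hA'var⟩

/-- No state can exist: well-founded descent. -/
lemma no_state {U : Ultrafilter X} {W : Ultrafilter Y} {B : X → Set Y}
    (h : ∀ lam : Cardinal.{q}, ℵ₀ ≤ lam →
      Indecomposable (U : Filter X) lam (2 ^ lam) ∨ Indecomposable (W : Filter Y) lam (2 ^ lam))
    (hNoBig : ∀ A ∈ U, ∀ G ∈ W, ¬ (∀ x ∈ A, G ⊆ B x ∨ G ∩ B x = ∅)) :
    ∀ ι ρ, ¬ PState U W B ι ρ := by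
  have key : ∀ ι, (∀ ι₂, ι₂ < ι → ∀ ρ, ¬ PState U W B ι₂ ρ) → ∀ ρ, ¬ PState U W B ι ρ := by
    intro ι IH1
    have key2 : ∀ ρ, (∀ ρ₂, ρ₂ < ρ → ¬ PState U W B ι ρ₂) → ¬ PState U W B ι ρ := by
      intro ρ IH2 hst
      obtain ⟨ι', ρ', hst', hdesc⟩ := descentRound h hNoBig hst
      rcases hdesc with hlt | ⟨heqι, hlt⟩
      · exact IH1 ι' hlt ρ' hst'
      · exact IH2 ρ' hlt (by rwa [heqι] at hst')
    intro ρ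
    exact Cardinal.lt_wf.induction (C := fun ρ => ¬ PState U W B ι ρ) ρ key2
  intro ι
  exact Cardinal.lt_wf.induction (C := fun ι => ∀ ρ, ¬ PState U W B ι ρ) ι key


/-- Main dichotomy: every set of pairs contains a rectangle or its complement does. -/
lemma main_dich (U : Ultrafilter X) (W : Ultrafilter Y)
    (h : ∀ lam : Cardinal.{q}, ℵ₀ ≤ lam →
      Indecomposable (U : Filter X) lam (2 ^ lam) ∨ Indecomposable (W : Filter Y) lam (2 ^ lam))
    (R : Set (X × Y)) :
    (∃ A ∈ U, ∃ V ∈ W, A ×ˢ V ⊆ R) ∨ (∃ A ∈ U, ∃ V ∈ W, A ×ˢ V ⊆ Rᶜ) := by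
  classical
  by_contra hcon
  push_neg at hcon
  obtain ⟨h₁, h₂⟩ := hcon
  set B : X → Set Y := fun x =>
    if {y | (x, y) ∈ R} ∈ W then {y | (x, y) ∈ R} else {y | (x, y) ∈ R}ᶜ with hBdef
  have hrow : ∀ x, ({y | (x, y) ∈ R} ∈ W → B x = {y | (x, y) ∈ R}) ∧
      ({y | (x, y) ∈ R} ∉ W → B x = {y | (x, y) ∈ R}ᶜ) := by
    intro x
    constructor
    · intro hx; simp only [hBdef, if_pos hx]
    · intro hx; simp only [hBdef, if_neg hx]
  have hNoBig : ∀ A ∈ U, ∀ G ∈ W, ¬ (∀ x ∈ A, G ⊆ B x ∨ G ∩ B x = ∅) := by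
    intro A hA G hG hsat
    set A₁ : Set X := {x | x ∈ A ∧ G ⊆ B x} with hA₁
    set A₂ : Set X := {x | x ∈ A ∧ G ∩ B x = ∅} with hA₂
    have hAsub : A ⊆ A₁ ∪ A₂ := by
      intro x hx
      rcases hsat x hx with h' | h'
      · exact Or.inl ⟨hx, h'⟩
      · exact Or.inr ⟨hx, h'⟩
    have hU12 : A₁ ∪ A₂ ∈ U := mem_of_superset hA hAsub
    set DD : Set X := {x | {y | (x, y) ∈ R} ∈ W} with hDD
    rcases Ultrafilter.union_mem_iff.mp hU12 with hA₁U | hA₂U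
    · rcases U.mem_or_compl_mem DD with hD | hDc
      · refine h₁ (A₁ ∩ DD) (inter_mem hA₁U hD) G hG ?_
        rintro ⟨x, y⟩ ⟨⟨hx1, hxD⟩, hy⟩
        have hBx := (hrow x).1 hxD
        have : y ∈ B x := hx1.2 hy
        rwa [hBx] at this
      · refine h₂ (A₁ ∩ DDᶜ) (inter_mem hA₁U hDc) G hG ?_
        rintro ⟨x, y⟩ ⟨⟨hx1, hxD⟩, hy⟩
        have hBx := (hrow x).2 hxD
        have : y ∈ B x := hx1.2 hy
        rw [hBx] at this
        exact this
    · rcases U.mem_or_compl_mem DD with hD | hDc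
      · refine h₂ (A₂ ∩ DD) (inter_mem hA₂U hD) G hG ?_
        rintro ⟨x, y⟩ ⟨⟨hx2, hxD⟩, hy⟩
        have hBx := (hrow x).1 hxD
        intro hxy
        have : y ∈ G ∩ B x := ⟨hy, by rw [hBx]; exact hxy⟩
        rw [hx2.2] at this
        exact notMem_empty y this
      · refine h₁ (A₂ ∩ DDᶜ) (inter_mem hA₂U hDc) G hG ?_
        rintro ⟨x, y⟩ ⟨⟨hx2, hxD⟩, hy⟩
        by_contra hxy
        have : y ∈ G ∩ B x := ⟨hy, by rw [(hrow x).2 hxD]; exact hxy⟩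
        rw [hx2.2] at this
        exact notMem_empty y this
  obtain ⟨ι₀, ρ₀, hst⟩ := init h hNoBig
  exact no_state h hNoBig ι₀ ρ₀ hst

end ProdUltraAux

theorem prod_ultrafilter_of_indecomposable {X Y : Type u}
    (U : Ultrafilter X) (W : Ultrafilter Y)
    (h : ∀ lam : Cardinal.{u}, ℵ₀ ≤ lam →
      Indecomposable (U : Filter X) lam (2 ^ lam) ∨
        Indecomposable (W : Filter Y) lam (2 ^ lam)) :
    IsUltra ((U : Filter X) ×ˢ (W : Filter Y)) := by
  have hne : ((U : Filter X) ×ˢ (W : Filter Y)).NeBot :=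
    Filter.prod_neBot.mpr ⟨U.neBot, W.neBot⟩
  have dich : ∀ S : Set (X × Y),
      S ∈ (U : Filter X) ×ˢ (W : Filter Y) ∨ Sᶜ ∈ (U : Filter X) ×ˢ (W : Filter Y) := by
    intro S
    rcases main_dich U W h S with ⟨A, hA, V, hV, hsub⟩ | ⟨A, hA, V, hV, hsub⟩
    · exact Or.inl (mem_of_superset (Filter.prod_mem_prod hA hV) hsub)
    · exact Or.inr (mem_of_superset (Filter.prod_mem_prod hA hV) hsub)
  refine ⟨Ultrafilter.ofComplNotMemIff ((U : Filter X) ×ˢ (W : Filter Y)) ?_, rfl⟩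
  intro s
  constructor
  · intro hs
    rcases dich s with h' | h'
    · exact h'
    · exact absurd h' hs
  · intro hs hcs
    have hmem : s ∩ sᶜ ∈ (U : Filter X) ×ˢ (W : Filter Y) := inter_mem hs hcs
    rw [Set.inter_compl_self] at hmem
    exact absurd hmem (Filter.empty_notMem _)
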